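/- arXiv:1202.6558 — 2 statements merged into one kernel-verified Lean document; each statement's English description precedes it below -/
import Mathlib

section
/- Let 1/2 < β < 1 and 1−β < α < 1/2, let T > 0 and L_b ≥ 0 with T ≤ min(1, 1/(2 L_b)). Let b : ℝ → ℝ satisfy |b(z)−b(z')| ≤ L_b |z−z'| for all z, z', let σ, g, g̃ : [0,T] → ℝ be β-Hölder continuous, and let x, x̃ : [0,T] → ℝ be continuous functions satisfying, for every t ∈ [0,T], x(t) = x₀ + ∫_0^t b(x(s)) ds + J_t(σ, g) and x̃(t) = x₀ + ∫_0^t b(x̃(s)) ds + J_t(σ, g̃), where J_t(σ, g) := ∫_0^t (D_{0+}^α σ)(r) · (D̃_{t−}^{1−α} g)(r) dr. Then ‖x − x̃‖_{0,T,∞} ≤ 4 k_{α,β} · ( ‖σ‖_{0,T,∞} + ‖σ‖_{0,T,β} ) · ‖g − g̃‖_{0,T,β} · T^β, where k_{α,β} := β·B(α+β, 1−α) / ((α+β−1)·Γ(α)·Γ(1−α)) + α·β·B(α+β, 1+β−α) / ((α+β−1)·(β−α)·Γ(α)·Γ(1−α)). (This is the stability estimate of Proposition 4.2 in the one-dimensional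 case, the stochastic integral being understood through Zähle's fractional representation.) -/
open MeasureTheory intervalIntegral

/-- The uniform norm of `f` on `[a,b]`: `‖f‖_{a,b,∞} = sup_{a ≤ r ≤ b} |f r|`. -/
noncomputable def supNorm (f : ℝ → ℝ) (a b : ℝ) : ℝ :=
  sSup ((fun r => |f r|) '' Set.Icc a b)

/-- The set of Hölder ratios of `f` on `[a,b]` with exponent `β`. -/
def holderSet (f : ℝ → ℝ) (a b β : ℝ) : Set ℝ :=
  {c | ∃ r s : ℝ, a ≤ r ∧ r < s ∧ s ≤ b ∧ c = |f s - f r| / (s - r) ^ β}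

/-- The `β`-Hölder seminorm of `f` on `[a,b]`. -/
noncomputable def holderNorm (f : ℝ → ℝ) (a b β : ℝ) : ℝ :=
  sSup (holderSet f a b β)

/-- Left-sided fractional derivative. -/
noncomputable def Dplus (f : ℝ → ℝ) (a α t : ℝ) : ℝ :=
  (1 / Real.Gamma (1 - α)) *
    (f t * (t - a) ^ (-α) + α * ∫ s in a..t, (f t - f s) * (t - s) ^ (-α - 1))

/-- Sign-normalized right-sided fractional derivative of order `1-α`. -/
noncomputable def Dminus (g : ℝ → ℝ) (b α t : ℝ) : ℝ :=
  (1 / Real.Gamma α) *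
    ((g t - g b) * (b - t) ^ (α - 1) + (1 - α) * ∫ s in t..b, (g t - g s) * (s - t) ^ (α - 2))

/-- The Beta function `B(x,y) = Γ(x)Γ(y)/Γ(x+y)`. -/
noncomputable def betaFn (x y : ℝ) : ℝ :=
  Real.Gamma x * Real.Gamma y / Real.Gamma (x + y)

/-- The constant `k_{α,β}` of Lemma 4.1. -/
noncomputable def kConst (α β : ℝ) : ℝ :=
  β * betaFn (α + β) (1 - α) / ((α + β - 1) * Real.Gamma α * Real.Gamma (1 - α)) +
    α * β * betaFn (α + β) (1 + β - α) /
      ((α + β - 1) * (β - α) * Real.Gamma α * Real.Gamma (1 - α))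

/-- The Young integral `J_t(σ,g) = ∫_0^t (D_{0+}^α σ)(r) (D̃_{t-}^{1-α} g)(r) dr`
in Zähle's fractional representation. -/
noncomputable def youngInt (α : ℝ) (σ g : ℝ → ℝ) (t : ℝ) : ℝ :=
  ∫ r in (0 : ℝ)..t, Dplus σ 0 α r * Dminus g t α r


open scoped NNReal ENNReal

section AuxLemmas
open Set


lemma aux_abs_integral_le {f G : ℝ → ℝ} {a b : ℝ} (hab : a ≤ b)
    (hG : IntervalIntegrable G volume a b)
    (hbound : ∀ s ∈ Set.Icc a b, |f s| ≤ G s) :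
    |∫ s in a..b, f s| ≤ ∫ s in a..b, G s := by
  by_cases hf : IntervalIntegrable f volume a b
  · refine (intervalIntegral.abs_integral_le_integral_abs hab).trans ?_
    exact intervalIntegral.integral_mono_on hab hf.abs hG hbound
  · rw [intervalIntegral.integral_undef hf, abs_zero]
    exact intervalIntegral.integral_nonneg hab (fun u hu => (abs_nonneg _).trans (hbound u hu))

lemma aux_intInt_sub_left {p : ℝ} (hp : -1 < p) (a c : ℝ) :
    IntervalIntegrable (fun s => (c - s) ^ p) volume a c := by
  have h := (intervalIntegral.intervalIntegrable_rpow' (a := c - a) (b := c - c) hp).comp_sub_left c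
  simpa using h

lemma aux_intInt_sub_right {p : ℝ} (hp : -1 < p) (r c : ℝ) :
    IntervalIntegrable (fun s => (s - r) ^ p) volume r c := by
  have h := (intervalIntegral.intervalIntegrable_rpow' (a := r - r) (b := c - r) hp).comp_sub_right r
  simpa using h

lemma aux_int_sub_left_val {p : ℝ} (hp : -1 < p) {a c : ℝ} (hac : a ≤ c) :
    ∫ s in a..c, (c - s) ^ p = (c - a) ^ (p + 1) / (p + 1) := by
  rw [intervalIntegral.integral_comp_sub_left (fun x => x ^ p) c, sub_self,
    integral_rpow (Or.inl hp), Real.zero_rpow (by linarith)]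
  ring

lemma aux_int_sub_right_val {p : ℝ} (hp : -1 < p) {r c : ℝ} (hrc : r ≤ c) :
    ∫ s in r..c, (s - r) ^ p = (c - r) ^ (p + 1) / (p + 1) := by
  rw [intervalIntegral.integral_comp_sub_right (fun x => x ^ p) r, sub_self,
    integral_rpow (Or.inl hp), Real.zero_rpow (by linarith)]
  ring

lemma aux_holder_le {f : ℝ → ℝ} {a b β : ℝ} (hβ : 0 < β) (hbdd : BddAbove (holderSet f a b β))
    {r s : ℝ} (har : a ≤ r) (hrs : r ≤ s) (hsb : s ≤ b) :
    |f s - f r| ≤ holderNorm f a b β * (s - r) ^ β := by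
  rcases eq_or_lt_of_le hrs with rfl | hlt
  · simp [Real.zero_rpow hβ.ne']
  · have hmem : |f s - f r| / (s - r) ^ β ∈ holderSet f a b β := ⟨r, s, har, hlt, hsb, rfl⟩
    have hle := le_csSup hbdd hmem
    have hpos : (0:ℝ) < (s - r) ^ β := Real.rpow_pos_of_pos (by linarith) β
    calc |f s - f r| = |f s - f r| / (s - r) ^ β * (s - r) ^ β := by field_simp
    _ ≤ holderNorm f a b β * (s - r) ^ β := mul_le_mul_of_nonneg_right hle hpos.le

lemma aux_holderNorm_nonneg {f : ℝ → ℝ} {a b β : ℝ} (hab : a < b)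
    (hbdd : BddAbove (holderSet f a b β)) : 0 ≤ holderNorm f a b β := by
  have hmem : |f b - f a| / (b - a) ^ β ∈ holderSet f a b β := ⟨a, b, le_refl a, hab, le_refl b, rfl⟩
  refine le_trans ?_ (le_csSup hbdd hmem)
  exact div_nonneg (abs_nonneg _) (Real.rpow_nonneg (by linarith) β)

lemma aux_holderSet_sub_bdd {g g' : ℝ → ℝ} {a b β : ℝ}
    (hg : BddAbove (holderSet g a b β)) (hg' : BddAbove (holderSet g' a b β)) :
    BddAbove (holderSet (fun s => g s - g' s) a b β) := by
  obtain ⟨N, hN⟩ := hg; obtain ⟨N', hN'⟩ := hg'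
  refine ⟨N + N', ?_⟩
  rintro c ⟨r, s, har, hrs, hsb, rfl⟩
  have h1 : |g s - g r| / (s - r) ^ β ≤ N := hN ⟨r, s, har, hrs, hsb, rfl⟩
  have h2 : |g' s - g' r| / (s - r) ^ β ≤ N' := hN' ⟨r, s, har, hrs, hsb, rfl⟩
  have hpos : (0:ℝ) < (s - r) ^ β := Real.rpow_pos_of_pos (by linarith) β
  have htri : |(g s - g' s) - (g r - g' r)| ≤ |g s - g r| + |g' s - g' r| := by
    have he : (g s - g' s) - (g r - g' r) = (g s - g r) - (g' s - g' r) := by ring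
    rw [he]; exact abs_sub _ _
  calc |(g s - g' s) - (g r - g' r)| / (s - r) ^ β
      ≤ (|g s - g r| + |g' s - g' r|) / (s - r) ^ β := by gcongr
    _ = |g s - g r| / (s - r) ^ β + |g' s - g' r| / (s - r) ^ β := add_div _ _ _
    _ ≤ N + N' := add_le_add h1 h2

lemma aux_holder_continuousOn {f : ℝ → ℝ} {a b β : ℝ} (hβ : 0 < β)
    (hbdd : BddAbove (holderSet f a b β)) : ContinuousOn f (Set.Icc a b) := by
  set C : ℝ := max (holderNorm f a b β) 0 with hC
  have hC0 : 0 ≤ C := le_max_right _ _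
  have key : ∀ x ∈ Set.Icc a b, ∀ y ∈ Set.Icc a b, |f y - f x| ≤ C * |y - x| ^ β := by
    intro x hx y hy
    rcases le_total x y with hxy | hxy
    · have := aux_holder_le hβ hbdd hx.1 hxy hy.2
      calc |f y - f x| ≤ holderNorm f a b β * (y - x) ^ β := this
        _ ≤ C * |y - x| ^ β := by
            rw [abs_of_nonneg (by linarith : (0:ℝ) ≤ y - x)]
            exact mul_le_mul_of_nonneg_right (le_max_left _ _)
              (Real.rpow_nonneg (by linarith) β)
    · have := aux_holder_le hβ hbdd hy.1 hxy hx.2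
      calc |f y - f x| = |f x - f y| := abs_sub_comm _ _
        _ ≤ holderNorm f a b β * (x - y) ^ β := this
        _ ≤ C * |y - x| ^ β := by
            rw [abs_sub_comm, abs_of_nonneg (by linarith : (0:ℝ) ≤ x - y)]
            exact mul_le_mul_of_nonneg_right (le_max_left _ _)
              (Real.rpow_nonneg (by linarith) β)
  have hH : HolderOnWith C.toNNReal β.toNNReal f (Set.Icc a b) := by
    intro x hx y hy
    have hco : ((β.toNNReal : ℝ≥0) : ℝ) = β := Real.coe_toNNReal β hβ.le
    rw [edist_dist, edist_dist]
    have h1 : ENNReal.ofReal (dist x y) ^ ((β.toNNReal : ℝ≥0) : ℝ)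
        = ENNReal.ofReal ((dist x y) ^ ((β.toNNReal : ℝ≥0) : ℝ)) :=
      ENNReal.ofReal_rpow_of_nonneg dist_nonneg (NNReal.coe_nonneg _)
    rw [h1, show ((C.toNNReal : ℝ≥0) : ℝ≥0∞) = ENNReal.ofReal C from rfl,
      ← ENNReal.ofReal_mul hC0]
    apply ENNReal.ofReal_le_ofReal
    rw [hco, Real.dist_eq, Real.dist_eq, abs_sub_comm x y, abs_sub_comm y x]
    exact key y hy x hx
  exact hH.continuousOn (Real.toNNReal_pos.mpr hβ)

lemma aux_supNorm_ge {f : ℝ → ℝ} {a b : ℝ} (hbdd : BddAbove ((fun r => |f r|) '' Set.Icc a b))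
    {r : ℝ} (hr : r ∈ Set.Icc a b) : |f r| ≤ supNorm f a b :=
  le_csSup hbdd ⟨r, hr, rfl⟩

lemma aux_supNorm_le {f : ℝ → ℝ} {a b : ℝ} (hab : a ≤ b) {C : ℝ}
    (h : ∀ r ∈ Set.Icc a b, |f r| ≤ C) : supNorm f a b ≤ C :=
  csSup_le ((Set.nonempty_Icc.mpr hab).image _) (by rintro _ ⟨r, hr, rfl⟩; exact h r hr)

lemma aux_sigma_bdd {σ : ℝ → ℝ} {T β : ℝ} (hβ : 0 < β) (hT : 0 < T)
    (hσ : BddAbove (holderSet σ 0 T β)) :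
    BddAbove ((fun r => |σ r|) '' Set.Icc 0 T) := by
  refine ⟨|σ 0| + holderNorm σ 0 T β * T ^ β, ?_⟩
  rintro _ ⟨r, hr, rfl⟩
  have h1 : |σ r - σ 0| ≤ holderNorm σ 0 T β * (r - 0) ^ β :=
    aux_holder_le hβ hσ le_rfl hr.1 hr.2
  have h2 : holderNorm σ 0 T β * (r - 0) ^ β ≤ holderNorm σ 0 T β * T ^ β := by
    apply mul_le_mul_of_nonneg_left _ (aux_holderNorm_nonneg hT hσ)
    rw [sub_zero]
    exact Real.rpow_le_rpow hr.1 hr.2 hβ.le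
  calc |σ r| ≤ |σ 0| + |σ r - σ 0| := by
        have := abs_add_le (σ 0) (σ r - σ 0); simpa using this
    _ ≤ |σ 0| + holderNorm σ 0 T β * T ^ β := by linarith

lemma aux_betaFn_real {x y : ℝ} (hx : 0 < x) (hy : 0 < y) :
    ∫ u in (0:ℝ)..1, u ^ (x - 1) * (1 - u) ^ (y - 1) = betaFn x y := by
  have key : Complex.betaIntegral (x:ℂ) (y:ℂ)
      = ((∫ u in (0:ℝ)..1, u ^ (x - 1) * (1 - u) ^ (y - 1) : ℝ) : ℂ) := by
    rw [Complex.betaIntegral, ← intervalIntegral.integral_ofReal]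
    apply intervalIntegral.integral_congr
    intro u hu
    rw [Set.uIcc_of_le (by norm_num : (0:ℝ) ≤ 1)] at hu
    simp only []
    rw [Complex.ofReal_mul, Complex.ofReal_cpow hu.1,
      Complex.ofReal_cpow (by linarith [hu.2] : (0:ℝ) ≤ 1 - u)]
    push_cast
    ring
  have h1 := Complex.Gamma_mul_Gamma_eq_betaIntegral
      (s := (x:ℂ)) (t := (y:ℂ)) (by simpa using hx) (by simpa using hy)
  rw [key] at h1
  have h2 : (x:ℂ) + (y:ℂ) = ((x + y : ℝ) : ℂ) := by push_cast; ring
  rw [h2, Complex.Gamma_ofReal, Complex.Gamma_ofReal, Complex.Gamma_ofReal,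
    ← Complex.ofReal_mul, ← Complex.ofReal_mul] at h1
  have h3 : Real.Gamma x * Real.Gamma y
      = Real.Gamma (x + y) * ∫ u in (0:ℝ)..1, u ^ (x - 1) * (1 - u) ^ (y - 1) := by
    exact_mod_cast h1
  have hG : Real.Gamma (x + y) ≠ 0 := (Real.Gamma_pos_of_pos (by linarith)).ne'
  rw [betaFn, eq_div_iff hG]
  linear_combination -h3

lemma aux_scaledBeta {x y t : ℝ} (hx : 0 < x) (hy : 0 < y) (ht : 0 < t) :
    ∫ s in (0:ℝ)..t, s ^ (x - 1) * (t - s) ^ (y - 1) = t ^ (x + y - 1) * betaFn x y := by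
  have h := intervalIntegral.smul_integral_comp_mul_left
      (f := fun s => s ^ (x - 1) * (t - s) ^ (y - 1)) (c := t) (a := 0) (b := 1)
  rw [mul_zero, mul_one] at h
  rw [← h]
  have h2 : ∫ u in (0:ℝ)..1, (t * u) ^ (x - 1) * (t - t * u) ^ (y - 1)
      = t ^ (x - 1) * t ^ (y - 1) * ∫ u in (0:ℝ)..1, u ^ (x - 1) * (1 - u) ^ (y - 1) := by
    rw [← intervalIntegral.integral_const_mul]
    apply intervalIntegral.integral_congr
    intro u hu
    rw [Set.uIcc_of_le (by norm_num : (0:ℝ) ≤ 1)] at hu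
    simp only []
    have e1 : (t * u) ^ (x - 1) = t ^ (x - 1) * u ^ (x - 1) := Real.mul_rpow ht.le hu.1
    have e2 : (t - t * u) ^ (y - 1) = t ^ (y - 1) * (1 - u) ^ (y - 1) := by
      rw [show t - t * u = t * (1 - u) by ring]
      exact Real.mul_rpow ht.le (by linarith [hu.2])
    rw [e1, e2]; ring
  have e3 : t * (t ^ (x - 1) * t ^ (y - 1)) = t ^ (x + y - 1) := by
    rw [← Real.rpow_add ht (x - 1) (y - 1)]
    nth_rewrite 1 [← Real.rpow_one t]
    rw [← Real.rpow_add ht]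
    congr 1; ring
  show t • (∫ u in (0:ℝ)..1, (t * u) ^ (x - 1) * (t - t * u) ^ (y - 1)) = _
  rw [smul_eq_mul, h2, aux_betaFn_real hx hy, ← mul_assoc, e3]

lemma aux_betaFn_pos {x y : ℝ} (hx : 0 < x) (hy : 0 < y) : 0 < betaFn x y := by
  have := Real.Gamma_pos_of_pos hx
  have := Real.Gamma_pos_of_pos hy
  have := Real.Gamma_pos_of_pos (by linarith : 0 < x + y)
  rw [betaFn]; positivity

lemma aux_betaFn_comm (x y : ℝ) : betaFn x y = betaFn y x := by
  rw [betaFn, betaFn, add_comm, mul_comm]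

lemma aux_beta1 {α β t : ℝ} (hα2 : α < 1) (hαβ : 1 < α + β) (ht : 0 < t) :
    ∫ r in (0:ℝ)..t, r ^ (-α) * (t - r) ^ (α + β - 1) = t ^ β * betaFn (1 - α) (α + β) := by
  have h := aux_scaledBeta (x := 1 - α) (y := α + β) (by linarith) (by linarith) ht
  rw [show (1 - α) - 1 = -α by ring, show (1 - α) + (α + β) - 1 = β by ring] at h
  exact h

lemma aux_beta2 {α β t : ℝ} (hβα : α < 1 + β) (hαβ : 1 < α + β) (ht : 0 < t) :
    ∫ r in (0:ℝ)..t, r ^ (β - α) * (t - r) ^ (α + β - 1)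
      = t ^ (2 * β) * betaFn (1 + β - α) (α + β) := by
  have h := aux_scaledBeta (x := 1 + β - α) (y := α + β) (by linarith) (by linarith) ht
  rw [show (1 + β - α) - 1 = β - α by ring, show (1 + β - α) + (α + β) - 1 = 2 * β by ring] at h
  exact h

lemma aux_inner_integrable {g : ℝ → ℝ} {T β α N : ℝ} (hβ : 0 < β) (hN : 0 ≤ N)
    (hol : ∀ ⦃u v : ℝ⦄, 0 ≤ u → u ≤ v → v ≤ T → |g v - g u| ≤ N * (v - u) ^ β)
    (hcont : ContinuousOn g (Set.Icc 0 T))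
    (hab : -1 < β + α - 2)
    {r t : ℝ} (h0r : 0 ≤ r) (hrt : r < t) (htT : t ≤ T) :
    IntervalIntegrable (fun s => (g r - g s) * (s - r) ^ (α - 2)) volume r t := by
  rw [intervalIntegrable_iff, Set.uIoc_of_le hrt.le]
  have hsub : Set.Ioo r t ⊆ Set.Icc 0 T := fun s hs =>
    ⟨by linarith [hs.1], by linarith [hs.2]⟩
  have hcont2 : ContinuousOn (fun s => (g r - g s) * (s - r) ^ (α - 2)) (Set.Ioo r t) := by
    apply ContinuousOn.mul
    · exact continuousOn_const.sub (hcont.mono hsub)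
    · apply ContinuousOn.rpow_const (continuousOn_id.sub continuousOn_const)
      intro s hs
      exact Or.inl (by show s - r ≠ 0; intro hc; nlinarith [hs.1])
  have haesm : AEStronglyMeasurable (fun s => (g r - g s) * (s - r) ^ (α - 2))
      (volume.restrict (Set.Ioc r t)) := by
    rw [← Measure.restrict_congr_set Ioo_ae_eq_Ioc]
    exact hcont2.aestronglyMeasurable measurableSet_Ioo
  have hbint : IntegrableOn (fun s => N * (s - r) ^ (β + α - 2)) (Set.Ioc r t) volume := by
    have := ((aux_intInt_sub_right hab r t).const_mul N)
    rw [intervalIntegrable_iff, Set.uIoc_of_le hrt.le] at this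
    exact this
  refine Integrable.mono' hbint haesm ?_
  rw [ae_restrict_iff' measurableSet_Ioc]
  refine Filter.Eventually.of_forall (fun s hs => ?_)
  have hsr : 0 < s - r := by linarith [hs.1]
  have h1 : |g r - g s| ≤ N * (s - r) ^ β := by
    rw [abs_sub_comm]
    exact hol h0r hs.1.le (le_trans hs.2 htT)
  have h2 : (0:ℝ) ≤ (s - r) ^ (α - 2) := Real.rpow_nonneg hsr.le _
  calc ‖(g r - g s) * (s - r) ^ (α - 2)‖
      = |g r - g s| * (s - r) ^ (α - 2) := by
        rw [Real.norm_eq_abs, abs_mul, abs_of_nonneg h2]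
    _ ≤ N * (s - r) ^ β * (s - r) ^ (α - 2) := mul_le_mul_of_nonneg_right h1 h2
    _ = N * (s - r) ^ (β + α - 2) := by
        rw [mul_assoc, ← Real.rpow_add hsr, show β + (α - 2) = β + α - 2 by ring]

lemma aux_Dminus_self (g : ℝ → ℝ) (α t : ℝ) : Dminus g t α t = 0 := by
  simp [Dminus]

lemma aux_Dplus_zero (σ : ℝ → ℝ) (α : ℝ) (hα : α ≠ 0) : Dplus σ 0 α 0 = 0 := by
  simp [Dplus, Real.zero_rpow (neg_ne_zero.mpr hα)]

lemma aux_Dminus_linear {g g' : ℝ → ℝ} {α : ℝ} {r t : ℝ}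
    (int_g : IntervalIntegrable (fun s => (g r - g s) * (s - r) ^ (α - 2)) volume r t)
    (int_g' : IntervalIntegrable (fun s => (g' r - g' s) * (s - r) ^ (α - 2)) volume r t) :
    Dminus g t α r - Dminus g' t α r = Dminus (fun s => g s - g' s) t α r := by
  unfold Dminus
  have hcomb : ∫ s in r..t, ((g r - g' r) - (g s - g' s)) * (s - r) ^ (α - 2)
      = (∫ s in r..t, (g r - g s) * (s - r) ^ (α - 2))
        - ∫ s in r..t, (g' r - g' s) * (s - r) ^ (α - 2) := by
    rw [← intervalIntegral.integral_sub int_g int_g']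
    apply intervalIntegral.integral_congr
    intro s _
    ring
  rw [hcomb]
  ring

lemma aux_Dminus_bound {g : ℝ → ℝ} {T α β N : ℝ}
    (hβ : 0 < β) (hβ1 : β < 1) (hα0 : 0 < α) (hα1 : α < 1) (hαβ : 1 < α + β) (hN : 0 ≤ N)
    (hol : ∀ ⦃u v : ℝ⦄, 0 ≤ u → u ≤ v → v ≤ T → |g v - g u| ≤ N * (v - u) ^ β)
    {r t : ℝ} (h0r : 0 ≤ r) (hrt : r < t) (htT : t ≤ T) :
    |Dminus g t α r| ≤ N * (β / ((α + β - 1) * Real.Gamma α)) * (t - r) ^ (α + β - 1) := by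
  have hΓ : 0 < Real.Gamma α := Real.Gamma_pos_of_pos hα0
  have htr : 0 < t - r := by linarith
  have hA : |(g r - g t) * (t - r) ^ (α - 1)| ≤ N * (t - r) ^ (α + β - 1) := by
    rw [abs_mul, abs_of_nonneg (Real.rpow_nonneg htr.le _), abs_sub_comm]
    calc |g t - g r| * (t - r) ^ (α - 1)
        ≤ N * (t - r) ^ β * (t - r) ^ (α - 1) :=
          mul_le_mul_of_nonneg_right (hol h0r hrt.le htT) (Real.rpow_nonneg htr.le _)
      _ = N * (t - r) ^ (α + β - 1) := by
          rw [mul_assoc, ← Real.rpow_add htr, show β + (α - 1) = α + β - 1 by ring]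
  have hB : |∫ s in r..t, (g r - g s) * (s - r) ^ (α - 2)|
      ≤ N * (t - r) ^ (α + β - 1) / (α + β - 1) := by
    have hint : IntervalIntegrable (fun s => N * (s - r) ^ (β + α - 2)) volume r t :=
      (aux_intInt_sub_right (by linarith) r t).const_mul N
    have hb := aux_abs_integral_le hrt.le hint (f := fun s => (g r - g s) * (s - r) ^ (α - 2)) ?_
    · rw [intervalIntegral.integral_const_mul,
        aux_int_sub_right_val (by linarith : (-1:ℝ) < β + α - 2) hrt.le] at hb
      rw [show β + α - 2 + 1 = α + β - 1 by ring] at hb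
      calc |∫ s in r..t, (g r - g s) * (s - r) ^ (α - 2)|
          ≤ N * ((t - r) ^ (α + β - 1) / (α + β - 1)) := hb
        _ = N * (t - r) ^ (α + β - 1) / (α + β - 1) := by ring
    · intro s hs
      rcases eq_or_lt_of_le hs.1 with heq | hsr
      · rw [← heq, sub_self r, Real.zero_rpow (by intro hc; nlinarith : β + α - 2 ≠ 0)]
        simp
      · have hsr' : 0 < s - r := by linarith
        have h1 : |g r - g s| ≤ N * (s - r) ^ β := by
          rw [abs_sub_comm]; exact hol h0r hs.1 (le_trans hs.2 htT)
        have h2 : (0:ℝ) ≤ (s - r) ^ (α - 2) := Real.rpow_nonneg hsr'.le _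
        calc |(g r - g s) * (s - r) ^ (α - 2)|
            = |g r - g s| * (s - r) ^ (α - 2) := by rw [abs_mul, abs_of_nonneg h2]
          _ ≤ N * (s - r) ^ β * (s - r) ^ (α - 2) := mul_le_mul_of_nonneg_right h1 h2
          _ = N * (s - r) ^ (β + α - 2) := by
              rw [mul_assoc, ← Real.rpow_add hsr', show β + (α - 2) = β + α - 2 by ring]
  have habs : |Dminus g t α r| ≤ (1 / Real.Gamma α) *
      (N * (t - r) ^ (α + β - 1) + (1 - α) * (N * (t - r) ^ (α + β - 1) / (α + β - 1))) := by
    rw [Dminus, abs_mul, abs_of_nonneg (by positivity : (0:ℝ) ≤ 1 / Real.Gamma α)]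
    apply mul_le_mul_of_nonneg_left _ (by positivity)
    calc |(g r - g t) * (t - r) ^ (α - 1) +
          (1 - α) * ∫ s in r..t, (g r - g s) * (s - r) ^ (α - 2)|
        ≤ |(g r - g t) * (t - r) ^ (α - 1)| +
          |(1 - α) * ∫ s in r..t, (g r - g s) * (s - r) ^ (α - 2)| := abs_add_le _ _
      _ ≤ N * (t - r) ^ (α + β - 1) +
          (1 - α) * (N * (t - r) ^ (α + β - 1) / (α + β - 1)) := by
          refine add_le_add hA ?_
          rw [abs_mul, abs_of_nonneg (by linarith : (0:ℝ) ≤ 1 - α)]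
          exact mul_le_mul_of_nonneg_left hB (by linarith)
  refine habs.trans (le_of_eq ?_)
  have hc : (0:ℝ) < α + β - 1 := by linarith
  field_simp
  ring

lemma aux_Dplus_bound {σ : ℝ → ℝ} {T α β Kinf Khol : ℝ}
    (hβ : 0 < β) (hβ1 : β < 1) (hα0 : 0 < α) (hβα : α < β) (hα1 : α < 1)
    (hKinf : ∀ u ∈ Set.Icc (0:ℝ) T, |σ u| ≤ Kinf) (hKh : 0 ≤ Khol)
    (hol : ∀ ⦃u v : ℝ⦄, 0 ≤ u → u ≤ v → v ≤ T → |σ v - σ u| ≤ Khol * (v - u) ^ β)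
    {r : ℝ} (h0r : 0 < r) (hrT : r ≤ T) :
    |Dplus σ 0 α r| ≤ (1 / Real.Gamma (1 - α)) *
      (Kinf * r ^ (-α) + (α / (β - α)) * Khol * r ^ (β - α)) := by
  have hΓ : 0 < Real.Gamma (1 - α) := Real.Gamma_pos_of_pos (by linarith)
  have hA : |σ r * (r - 0) ^ (-α)| ≤ Kinf * r ^ (-α) := by
    rw [sub_zero, abs_mul, abs_of_nonneg (Real.rpow_nonneg h0r.le _)]
    exact mul_le_mul_of_nonneg_right (hKinf r ⟨h0r.le, hrT⟩) (Real.rpow_nonneg h0r.le _)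
  have hB : |∫ s in (0:ℝ)..r, (σ r - σ s) * (r - s) ^ (-α - 1)|
      ≤ Khol * r ^ (β - α) / (β - α) := by
    have hint : IntervalIntegrable (fun s => Khol * (r - s) ^ (β - α - 1)) volume 0 r :=
      (aux_intInt_sub_left (by linarith) 0 r).const_mul Khol
    have hb := aux_abs_integral_le h0r.le hint
        (f := fun s => (σ r - σ s) * (r - s) ^ (-α - 1)) ?_
    · rw [intervalIntegral.integral_const_mul,
        aux_int_sub_left_val (by linarith : (-1:ℝ) < β - α - 1) h0r.le] at hb
      rw [show β - α - 1 + 1 = β - α by ring, sub_zero] at hb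
      calc |∫ s in (0:ℝ)..r, (σ r - σ s) * (r - s) ^ (-α - 1)|
          ≤ Khol * (r ^ (β - α) / (β - α)) := hb
        _ = Khol * r ^ (β - α) / (β - α) := by ring
    · intro s hs
      rcases eq_or_lt_of_le hs.2 with heq | hsr
      · rw [heq, sub_self r, Real.zero_rpow (by intro hc; nlinarith : β - α - 1 ≠ 0)]
        simp
      · have hrs : 0 < r - s := by linarith
        have h1 : |σ r - σ s| ≤ Khol * (r - s) ^ β := hol hs.1 hs.2 hrT
        have h2 : (0:ℝ) ≤ (r - s) ^ (-α - 1) := Real.rpow_nonneg hrs.le _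
        calc |(σ r - σ s) * (r - s) ^ (-α - 1)|
            = |σ r - σ s| * (r - s) ^ (-α - 1) := by rw [abs_mul, abs_of_nonneg h2]
          _ ≤ Khol * (r - s) ^ β * (r - s) ^ (-α - 1) := mul_le_mul_of_nonneg_right h1 h2
          _ = Khol * (r - s) ^ (β - α - 1) := by
              rw [mul_assoc, ← Real.rpow_add hrs, show β + (-α - 1) = β - α - 1 by ring]
  have hβα' : (0:ℝ) < β - α := by linarith
  calc |Dplus σ 0 α r|
      = (1 / Real.Gamma (1 - α)) *
        |σ r * (r - 0) ^ (-α) + α * ∫ s in (0:ℝ)..r, (σ r - σ s) * (r - s) ^ (-α - 1)| := by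
        rw [Dplus, abs_mul, abs_of_nonneg (by positivity : (0:ℝ) ≤ 1 / Real.Gamma (1 - α))]
    _ ≤ (1 / Real.Gamma (1 - α)) *
        (Kinf * r ^ (-α) + (α / (β - α)) * Khol * r ^ (β - α)) := by
        apply mul_le_mul_of_nonneg_left _ (by positivity)
        refine (abs_add_le _ _).trans (add_le_add hA ?_)
        rw [abs_mul, abs_of_nonneg hα0.le]
        calc α * |∫ s in (0:ℝ)..r, (σ r - σ s) * (r - s) ^ (-α - 1)|
            ≤ α * (Khol * r ^ (β - α) / (β - α)) := mul_le_mul_of_nonneg_left hB hα0.le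
          _ = (α / (β - α)) * Khol * r ^ (β - α) := by field_simp

lemma aux_ae_ne_one : ∀ᵐ u : ℝ ∂(volume : Measure ℝ), u ≠ 1 := by
  rw [MeasureTheory.ae_iff]
  have h : {u : ℝ | ¬u ≠ 1} = {(1:ℝ)} := by ext u; simp
  rw [h]
  exact Real.volume_singleton

lemma aux_Dplus_cont {σ : ℝ → ℝ} {T α β N : ℝ}
    (hβ : 0 < β) (hβ1 : β < 1) (hα0 : 0 < α) (hβα : α < β) (hα1 : α < 1) (hN : 0 ≤ N)
    (hσc : ContinuousOn σ (Set.Icc 0 T))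
    (hol : ∀ ⦃u v : ℝ⦄, 0 ≤ u → u ≤ v → v ≤ T → |σ v - σ u| ≤ N * (v - u) ^ β)
    {r₀ : ℝ} (hr₀ : r₀ ∈ Set.Ioo (0:ℝ) T) :
    ContinuousAt (fun r => Dplus σ 0 α r) r₀ := by
  obtain ⟨hr₀0, hr₀T⟩ := hr₀
  have hV : Set.Ioo (r₀ / 2) T ∈ nhds r₀ := Ioo_mem_nhds (by linarith) hr₀T
  have hPcont : ContinuousAt
      (fun r => ∫ u in (0:ℝ)..1, (σ r - σ (r * u)) * (r - r * u) ^ (-α - 1)) r₀ := by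
    apply intervalIntegral.continuousAt_of_dominated_interval
        (bound := fun u => N * (r₀ / 2) ^ (β - α - 1) * (1 - u) ^ (β - α - 1))
    · refine Filter.eventually_of_mem hV (fun r hr => ?_)
      rw [Set.uIoc_of_le (by norm_num : (0:ℝ) ≤ 1),
        ← Measure.restrict_congr_set Ioo_ae_eq_Ioc]
      have hr0 : 0 < r := lt_trans (by linarith) hr.1
      apply ContinuousOn.aestronglyMeasurable _ measurableSet_Ioo
      apply ContinuousOn.mul
      · apply ContinuousOn.sub continuousOn_const
        apply ContinuousOn.comp hσc ((continuous_mul_left r).continuousOn)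
        intro u hu
        constructor
        · show (0:ℝ) ≤ r * u
          nlinarith [hu.1]
        · show r * u ≤ T
          nlinarith [hu.1, hu.2, hr.2]
      · apply ContinuousOn.rpow_const
          ((continuous_const.sub (continuous_mul_left r)).continuousOn)
        intro u hu
        refine Or.inl (ne_of_gt ?_)
        show (0:ℝ) < r - r * u
        nlinarith [hu.1, hu.2]
    · refine Filter.eventually_of_mem hV (fun r hr => ?_)
      refine Filter.Eventually.of_forall (fun u hu => ?_)
      rw [Set.uIoc_of_le (by norm_num : (0:ℝ) ≤ 1)] at hu
      have hr0 : 0 < r := lt_trans (by linarith) hr.1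
      rcases eq_or_lt_of_le hu.2 with heq | hu1
      · rw [heq, Real.norm_eq_abs, show r - r * 1 = 0 by ring,
          Real.zero_rpow (by intro hc; nlinarith : -α - 1 ≠ 0), mul_zero, abs_zero,
          show (1:ℝ) - 1 = 0 by ring,
          Real.zero_rpow (by intro hc; nlinarith : β - α - 1 ≠ 0), mul_zero]
      · have hru : r - r * u = r * (1 - u) := by ring
        have hpos : 0 < r - r * u := by nlinarith
        have h1 : |σ r - σ (r * u)| ≤ N * (r - r * u) ^ β :=
          hol (by nlinarith [hu.1]) (by nlinarith [hu.1]) hr.2.le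
        calc ‖(σ r - σ (r * u)) * (r - r * u) ^ (-α - 1)‖
            = |σ r - σ (r * u)| * (r - r * u) ^ (-α - 1) := by
              rw [Real.norm_eq_abs, abs_mul, abs_of_nonneg (Real.rpow_nonneg hpos.le _)]
          _ ≤ N * (r - r * u) ^ β * (r - r * u) ^ (-α - 1) :=
              mul_le_mul_of_nonneg_right h1 (Real.rpow_nonneg hpos.le _)
          _ = N * (r - r * u) ^ (β - α - 1) := by
              rw [mul_assoc, ← Real.rpow_add hpos, show β + (-α - 1) = β - α - 1 by ring]
          _ = N * (r ^ (β - α - 1) * (1 - u) ^ (β - α - 1)) := by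
              rw [hru, Real.mul_rpow hr0.le (by linarith)]
          _ ≤ N * ((r₀ / 2) ^ (β - α - 1) * (1 - u) ^ (β - α - 1)) := by
              apply mul_le_mul_of_nonneg_left _ hN
              apply mul_le_mul_of_nonneg_right _ (Real.rpow_nonneg (by linarith) _)
              exact Real.rpow_le_rpow_of_nonpos (by linarith) hr.1.le (by linarith)
          _ = N * (r₀ / 2) ^ (β - α - 1) * (1 - u) ^ (β - α - 1) := by ring
    · exact (aux_intInt_sub_left (by linarith : (-1:ℝ) < β - α - 1) 0 1).const_mul _
    · filter_upwards [aux_ae_ne_one] with u hu1 hu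
      rw [Set.uIoc_of_le (by norm_num : (0:ℝ) ≤ 1)] at hu
      have hu1' : u < 1 := lt_of_le_of_ne hu.2 hu1
      have h2 : ContinuousAt σ r₀ := hσc.continuousAt (Icc_mem_nhds (by linarith) (by linarith))
      have h3 : ContinuousAt σ (r₀ * u) :=
        hσc.continuousAt (Icc_mem_nhds (by nlinarith [hu.1]) (by nlinarith [hu.1]))
      apply ContinuousAt.mul
      · exact h2.sub (ContinuousAt.comp h3 (continuous_mul_right u).continuousAt)
      · apply ContinuousAt.rpow_const
          (continuous_id.sub (continuous_mul_right u)).continuousAt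
        refine Or.inl (ne_of_gt ?_)
        show (0:ℝ) < r₀ - r₀ * u
        nlinarith [hu.1]
  have hGeq : ∀ r : ℝ, (∫ s in (0:ℝ)..r, (σ r - σ s) * (r - s) ^ (-α - 1))
      = r * ∫ u in (0:ℝ)..1, (σ r - σ (r * u)) * (r - r * u) ^ (-α - 1) := by
    intro r
    have h := intervalIntegral.smul_integral_comp_mul_left
        (f := fun s => (σ r - σ s) * (r - s) ^ (-α - 1)) (c := r) (a := 0) (b := 1)
    rw [mul_zero, mul_one] at h
    rw [← h, smul_eq_mul]
  have hfinal : ContinuousAt (fun r => (1 / Real.Gamma (1 - α)) *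
      (σ r * (r - 0) ^ (-α) +
        α * (r * ∫ u in (0:ℝ)..1, (σ r - σ (r * u)) * (r - r * u) ^ (-α - 1)))) r₀ := by
    apply ContinuousAt.mul continuousAt_const
    apply ContinuousAt.add
    · apply ContinuousAt.mul (hσc.continuousAt (Icc_mem_nhds hr₀0 hr₀T))
      apply ContinuousAt.rpow_const (continuous_id.sub continuous_const).continuousAt
      refine Or.inl (ne_of_gt ?_)
      show (0:ℝ) < r₀ - 0
      linarith
    · exact continuousAt_const.mul (continuousAt_id.mul hPcont)
  apply hfinal.congr
  refine Filter.eventually_of_mem hV (fun r _ => ?_)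
  show _ = Dplus σ 0 α r
  rw [Dplus, hGeq r]

lemma aux_Dminus_cont {g : ℝ → ℝ} {T α β N t : ℝ}
    (hβ : 0 < β) (hβ1 : β < 1) (hα0 : 0 < α) (hα1 : α < 1) (hαβ : 1 < α + β) (hN : 0 ≤ N)
    (hgc : ContinuousOn g (Set.Icc 0 T))
    (hol : ∀ ⦃u v : ℝ⦄, 0 ≤ u → u ≤ v → v ≤ T → |g v - g u| ≤ N * (v - u) ^ β)
    (ht0 : 0 < t) (htT : t ≤ T)
    {r₀ : ℝ} (hr₀ : r₀ ∈ Set.Ioo (0:ℝ) t) :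
    ContinuousAt (fun r => Dminus g t α r) r₀ := by
  obtain ⟨hr₀0, hr₀t⟩ := hr₀
  have hV : Set.Ioo (0:ℝ) ((r₀ + t) / 2) ∈ nhds r₀ := Ioo_mem_nhds hr₀0 (by linarith)
  have hQcont : ContinuousAt (fun r =>
      ∫ u in (0:ℝ)..1, (g r - g ((t - r) * u + r)) * ((t - r) * u + r - r) ^ (α - 2)) r₀ := by
    apply intervalIntegral.continuousAt_of_dominated_interval
        (bound := fun u => N * ((t - r₀) / 2) ^ (α + β - 2) * u ^ (α + β - 2))
    · refine Filter.eventually_of_mem hV (fun r hr => ?_)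
      rw [Set.uIoc_of_le (by norm_num : (0:ℝ) ≤ 1),
        ← Measure.restrict_congr_set Ioo_ae_eq_Ioc]
      have htr : 0 < t - r := by
        have := hr.2; simp only [Set.mem_Ioo] at hr; linarith [hr.2]
      apply ContinuousOn.aestronglyMeasurable _ measurableSet_Ioo
      apply ContinuousOn.mul
      · apply ContinuousOn.sub
        · exact continuousOn_const.congr (fun u _ => rfl) |>.mono (Set.subset_univ _) |>.congr (fun u _ => rfl)
        · apply ContinuousOn.comp hgc
            (((continuous_mul_left (t - r)).add continuous_const).continuousOn)
          intro u hu
          constructor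
          · show (0:ℝ) ≤ (t - r) * u + r
            nlinarith [hu.1, hr.1]
          · show (t - r) * u + r ≤ T
            nlinarith [hu.2, hr.1]
      · apply ContinuousOn.rpow_const
          ((((continuous_mul_left (t - r)).add continuous_const).sub
            continuous_const).continuousOn)
        intro u hu
        refine Or.inl (ne_of_gt ?_)
        show (0:ℝ) < (t - r) * u + r - r
        nlinarith [hu.1]
    · refine Filter.eventually_of_mem hV (fun r hr => ?_)
      refine Filter.Eventually.of_forall (fun u hu => ?_)
      rw [Set.uIoc_of_le (by norm_num : (0:ℝ) ≤ 1)] at hu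
      have htr : 0 < t - r := by
        simp only [Set.mem_Ioo] at hr; linarith [hr.2]
      have htr2 : (t - r₀) / 2 ≤ t - r := by
        simp only [Set.mem_Ioo] at hr; linarith [hr.2]
      have hbase : (t - r) * u + r - r = (t - r) * u := by ring
      have hpos : 0 < (t - r) * u := mul_pos htr hu.1
      have h1 : |g r - g ((t - r) * u + r)| ≤ N * ((t - r) * u) ^ β := by
        rw [abs_sub_comm]
        have := hol (u := r) (v := (t - r) * u + r)
          (by simp only [Set.mem_Ioo] at hr; linarith [hr.1])
          (by nlinarith [hu.1])
          (by nlinarith [hu.2])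
        rw [show (t - r) * u + r - r = (t - r) * u by ring] at this
        exact this
      calc ‖(g r - g ((t - r) * u + r)) * ((t - r) * u + r - r) ^ (α - 2)‖
          = |g r - g ((t - r) * u + r)| * ((t - r) * u) ^ (α - 2) := by
            rw [Real.norm_eq_abs, hbase, abs_mul, abs_of_nonneg (Real.rpow_nonneg hpos.le _)]
        _ ≤ N * ((t - r) * u) ^ β * ((t - r) * u) ^ (α - 2) :=
            mul_le_mul_of_nonneg_right h1 (Real.rpow_nonneg hpos.le _)
        _ = N * ((t - r) * u) ^ (α + β - 2) := by
            rw [mul_assoc, ← Real.rpow_add hpos, show β + (α - 2) = α + β - 2 by ring]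
        _ = N * ((t - r) ^ (α + β - 2) * u ^ (α + β - 2)) := by
            rw [Real.mul_rpow htr.le hu.1.le]
        _ ≤ N * (((t - r₀) / 2) ^ (α + β - 2) * u ^ (α + β - 2)) := by
            apply mul_le_mul_of_nonneg_left _ hN
            apply mul_le_mul_of_nonneg_right _ (Real.rpow_nonneg hu.1.le _)
            exact Real.rpow_le_rpow_of_nonpos (by linarith) htr2 (by linarith)
        _ = N * ((t - r₀) / 2) ^ (α + β - 2) * u ^ (α + β - 2) := by ring
    · have hint : IntervalIntegrable (fun u : ℝ => u ^ (α + β - 2)) volume 0 1 :=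
        intervalIntegral.intervalIntegrable_rpow' (by linarith)
      exact hint.const_mul _
    · filter_upwards [aux_ae_ne_one] with u hu1 hu
      rw [Set.uIoc_of_le (by norm_num : (0:ℝ) ≤ 1)] at hu
      have hu1' : u < 1 := lt_of_le_of_ne hu.2 hu1
      have hgr : ContinuousAt g r₀ :=
        hgc.continuousAt (Icc_mem_nhds (by linarith) (by linarith))
      have hpt : 0 < (t - r₀) * u := mul_pos (by linarith) hu.1
      have hptT : (t - r₀) * u + r₀ < T := by nlinarith
      have hg2 : ContinuousAt g ((t - r₀) * u + r₀) :=
        hgc.continuousAt (Icc_mem_nhds (by nlinarith) hptT)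
      have hinner : ContinuousAt (fun r => (t - r) * u + r) r₀ :=
        (((continuous_const.sub continuous_id).mul continuous_const).add
          continuous_id).continuousAt
      apply ContinuousAt.mul
      · exact hgr.sub (ContinuousAt.comp hg2 hinner)
      · apply ContinuousAt.rpow_const (hinner.sub continuousAt_id)
        refine Or.inl (ne_of_gt ?_)
        show (0:ℝ) < (t - r₀) * u + r₀ - r₀
        nlinarith
  have hKeq : ∀ r : ℝ, (∫ s in r..t, (g r - g s) * (s - r) ^ (α - 2))
      = (t - r) * ∫ u in (0:ℝ)..1,
          (g r - g ((t - r) * u + r)) * ((t - r) * u + r - r) ^ (α - 2) := by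
    intro r
    have h := intervalIntegral.smul_integral_comp_mul_add
        (f := fun s => (g r - g s) * (s - r) ^ (α - 2)) (c := t - r) (d := r) (a := 0) (b := 1)
    rw [show (t - r) * 0 + r = r by ring, show (t - r) * 1 + r = t by ring] at h
    rw [← h, smul_eq_mul]
  have hfinal : ContinuousAt (fun r => (1 / Real.Gamma α) *
      ((g r - g t) * (t - r) ^ (α - 1) + (1 - α) * ((t - r) * ∫ u in (0:ℝ)..1,
        (g r - g ((t - r) * u + r)) * ((t - r) * u + r - r) ^ (α - 2)))) r₀ := by
    apply ContinuousAt.mul continuousAt_const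
    apply ContinuousAt.add
    · apply ContinuousAt.mul
      · exact (hgc.continuousAt (Icc_mem_nhds (by linarith) (by linarith))).sub
          continuousAt_const
      · apply ContinuousAt.rpow_const (continuous_const.sub continuous_id).continuousAt
        refine Or.inl (ne_of_gt ?_)
        show (0:ℝ) < t - r₀
        linarith
    · exact continuousAt_const.mul
        (((continuous_const.sub continuous_id).continuousAt).mul hQcont)
  apply hfinal.congr
  refine Filter.Eventually.of_forall (fun r => ?_)
  show _ = Dminus g t α r
  rw [Dminus, hKeq r]

set_option maxHeartbeats 1000000 in
lemma aux_J_bound {α β T : ℝ} {σ g g' : ℝ → ℝ}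
    (hβ1 : 1 / 2 < β) (hβ2 : β < 1) (hα1 : 1 - β < α) (hα2 : α < 1 / 2)
    (hT : 0 < T) (hT1 : T ≤ 1)
    (hσ : BddAbove (holderSet σ 0 T β)) (hg : BddAbove (holderSet g 0 T β))
    (hg' : BddAbove (holderSet g' 0 T β))
    {t : ℝ} (ht0 : 0 ≤ t) (htT : t ≤ T) :
    |youngInt α σ g t - youngInt α σ g' t| ≤
      kConst α β * (supNorm σ 0 T + holderNorm σ 0 T β) *
        holderNorm (fun s => g s - g' s) 0 T β * T ^ β := by
  have hβ0 : 0 < β := by linarith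
  have hα0 : 0 < α := by linarith
  have hβα : α < β := by linarith
  have hαl : α < 1 := by linarith
  have hαβ : 1 < α + β := by linarith
  have hba : (0:ℝ) < β - α := by linarith
  have hΓa : 0 < Real.Gamma α := Real.Gamma_pos_of_pos hα0
  have hΓ1a : 0 < Real.Gamma (1 - α) := Real.Gamma_pos_of_pos (by linarith)
  have hc : (0:ℝ) < α + β - 1 := by linarith
  have hB1 : 0 < betaFn (α + β) (1 - α) := aux_betaFn_pos (by linarith) (by linarith)
  have hB2 : 0 < betaFn (α + β) (1 + β - α) := aux_betaFn_pos (by linarith) (by linarith)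
  set t1 : ℝ := β * betaFn (α + β) (1 - α) /
      ((α + β - 1) * Real.Gamma α * Real.Gamma (1 - α)) with ht1
  set t2 : ℝ := α * β * betaFn (α + β) (1 + β - α) /
      ((α + β - 1) * (β - α) * Real.Gamma α * Real.Gamma (1 - α)) with ht2
  have ht1p : 0 < t1 := by
    rw [ht1]
    exact div_pos (mul_pos hβ0 hB1) (mul_pos (mul_pos hc hΓa) hΓ1a)
  have ht2p : 0 < t2 := by
    rw [ht2]
    exact div_pos (mul_pos (mul_pos hα0 hβ0) hB2)
      (mul_pos (mul_pos (mul_pos hc hba) hΓa) hΓ1a)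
  have hk : kConst α β = t1 + t2 := rfl
  set Kinf := supNorm σ 0 T with hKinf
  set Khol := holderNorm σ 0 T β with hKhol
  have hsubB : BddAbove (holderSet (fun s => g s - g' s) 0 T β) := aux_holderSet_sub_bdd hg hg'
  set H := holderNorm (fun s => g s - g' s) 0 T β with hH
  have hH0 : 0 ≤ H := aux_holderNorm_nonneg hT hsubB
  have hKh0 : 0 ≤ Khol := aux_holderNorm_nonneg hT hσ
  have hKinfb : ∀ u ∈ Set.Icc (0:ℝ) T, |σ u| ≤ Kinf :=
    fun u hu => aux_supNorm_ge (aux_sigma_bdd hβ0 hT hσ) hu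
  have hKinf0 : 0 ≤ Kinf := le_trans (abs_nonneg _) (hKinfb 0 ⟨le_refl 0, hT.le⟩)
  have holσ : ∀ ⦃u v : ℝ⦄, 0 ≤ u → u ≤ v → v ≤ T → |σ v - σ u| ≤ Khol * (v - u) ^ β :=
    fun u v h1 h2 h3 => aux_holder_le hβ0 hσ h1 h2 h3
  set Ng := holderNorm g 0 T β with hNg
  set Ng' := holderNorm g' 0 T β with hNg'
  have hNg0 : 0 ≤ Ng := aux_holderNorm_nonneg hT hg
  have hNg'0 : 0 ≤ Ng' := aux_holderNorm_nonneg hT hg'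
  have holg : ∀ ⦃u v : ℝ⦄, 0 ≤ u → u ≤ v → v ≤ T → |g v - g u| ≤ Ng * (v - u) ^ β :=
    fun u v h1 h2 h3 => aux_holder_le hβ0 hg h1 h2 h3
  have holg' : ∀ ⦃u v : ℝ⦄, 0 ≤ u → u ≤ v → v ≤ T → |g' v - g' u| ≤ Ng' * (v - u) ^ β :=
    fun u v h1 h2 h3 => aux_holder_le hβ0 hg' h1 h2 h3
  have holh : ∀ ⦃u v : ℝ⦄, 0 ≤ u → u ≤ v → v ≤ T →
      |(g v - g' v) - (g u - g' u)| ≤ H * (v - u) ^ β :=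
    fun u v h1 h2 h3 => aux_holder_le hβ0 hsubB h1 h2 h3
  have hσc : ContinuousOn σ (Set.Icc 0 T) := aux_holder_continuousOn hβ0 hσ
  have hgc : ContinuousOn g (Set.Icc 0 T) := aux_holder_continuousOn hβ0 hg
  have hg'c : ContinuousOn g' (Set.Icc 0 T) := aux_holder_continuousOn hβ0 hg'
  have hRHS0 : 0 ≤ kConst α β * (Kinf + Khol) * H * T ^ β := by
    rw [hk]
    exact mul_nonneg (mul_nonneg (mul_nonneg (by linarith) (by linarith)) hH0)
      (Real.rpow_nonneg hT.le β)
  rcases eq_or_lt_of_le ht0 with heq | ht0'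
  · rw [youngInt, youngInt, ← heq, intervalIntegral.integral_same,
      intervalIntegral.integral_same, sub_zero, abs_zero]
    exact hRHS0
  have houter : ∀ (G : ℝ → ℝ) (NG : ℝ), 0 ≤ NG →
      (∀ ⦃u v : ℝ⦄, 0 ≤ u → u ≤ v → v ≤ T → |G v - G u| ≤ NG * (v - u) ^ β) →
      ContinuousOn G (Set.Icc 0 T) →
      IntervalIntegrable (fun r => Dplus σ 0 α r * Dminus G t α r) volume 0 t := by
    intro G NG hNG holG hGc
    rw [intervalIntegrable_iff, Set.uIoc_of_le ht0]
    set C := (1 / Real.Gamma (1 - α)) * (Kinf + (α / (β - α)) * Khol) *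
        (NG * (β / ((α + β - 1) * Real.Gamma α))) with hC
    have hq0 : (0:ℝ) ≤ Kinf + α / (β - α) * Khol :=
      add_nonneg hKinf0 (mul_nonneg (div_nonneg hα0.le hba.le) hKh0)
    have hq1 : (0:ℝ) ≤ NG * (β / ((α + β - 1) * Real.Gamma α)) :=
      mul_nonneg hNG (div_nonneg hβ0.le (mul_nonneg hc.le hΓa.le))
    have hC0 : 0 ≤ C := by
      rw [hC]
      exact mul_nonneg (mul_nonneg (one_div_nonneg.mpr hΓ1a.le) hq0) hq1
    have haesm : AEStronglyMeasurable (fun r => Dplus σ 0 α r * Dminus G t α r)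
        (volume.restrict (Set.Ioc 0 t)) := by
      rw [← Measure.restrict_congr_set Ioo_ae_eq_Ioc]
      refine ContinuousOn.aestronglyMeasurable ?_ measurableSet_Ioo
      intro r hr
      have h1 := aux_Dplus_cont hβ0 hβ2 hα0 hβα hαl hKh0 hσc holσ
          (r₀ := r) ⟨hr.1, lt_of_lt_of_le hr.2 htT⟩
      have h2 := aux_Dminus_cont hβ0 hβ2 hα0 hαl hαβ hNG hGc holG ht0' htT (r₀ := r) hr
      exact (h1.mul h2).continuousWithinAt
    have hbint : IntegrableOn (fun r => C * r ^ (-α)) (Set.Ioc 0 t) volume := by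
      have hh := (intervalIntegral.intervalIntegrable_rpow' (a := 0) (b := t)
          (by linarith : (-1:ℝ) < -α)).const_mul C
      rw [intervalIntegrable_iff, Set.uIoc_of_le ht0] at hh
      exact hh
    refine Integrable.mono' hbint haesm ?_
    rw [ae_restrict_iff' measurableSet_Ioc]
    refine Filter.Eventually.of_forall (fun r hr => ?_)
    rcases eq_or_lt_of_le hr.2 with heq | hrt
    · rw [Real.norm_eq_abs, heq, aux_Dminus_self, mul_zero, abs_zero]
      exact mul_nonneg hC0 (Real.rpow_nonneg ht0 _)
    · have h1 := aux_Dplus_bound hβ0 hβ2 hα0 hβα hαl hKinfb hKh0 holσ hr.1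
        (le_trans hr.2 htT)
      have h2 := aux_Dminus_bound hβ0 hβ2 hα0 hαl hαβ hNG holG hr.1.le hrt htT
      have e1 : r ^ (β - α) ≤ r ^ (-α) := by
        have he : r ^ (β - α) = r ^ β * r ^ (-α) := by
          rw [show β - α = β + -α by ring, Real.rpow_add hr.1]
        rw [he]
        have hrb : r ^ β ≤ 1 :=
          Real.rpow_le_one hr.1.le (by linarith [hr.2, htT, hT1]) hβ0.le
        nlinarith [Real.rpow_nonneg hr.1.le (-α)]
      have e2 : (t - r) ^ (α + β - 1) ≤ 1 :=
        Real.rpow_le_one (by linarith [hrt]) (by linarith [hr.1, htT, hT1]) (by linarith)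
      have h1' : |Dplus σ 0 α r| ≤
          (1 / Real.Gamma (1 - α)) * (Kinf + (α / (β - α)) * Khol) * r ^ (-α) := by
        refine h1.trans ?_
        have h3 := mul_le_mul_of_nonneg_left e1
          (mul_nonneg (div_nonneg hα0.le hba.le) hKh0)
        calc (1 / Real.Gamma (1 - α)) *
            (Kinf * r ^ (-α) + α / (β - α) * Khol * r ^ (β - α))
            ≤ (1 / Real.Gamma (1 - α)) *
              (Kinf * r ^ (-α) + α / (β - α) * Khol * r ^ (-α)) := by
              apply mul_le_mul_of_nonneg_left _ (one_div_nonneg.mpr hΓ1a.le)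
              linarith [h3]
          _ = (1 / Real.Gamma (1 - α)) * (Kinf + α / (β - α) * Khol) * r ^ (-α) := by ring
      have h2' : |Dminus G t α r| ≤ NG * (β / ((α + β - 1) * Real.Gamma α)) := by
        refine h2.trans ?_
        calc NG * (β / ((α + β - 1) * Real.Gamma α)) * (t - r) ^ (α + β - 1)
            ≤ NG * (β / ((α + β - 1) * Real.Gamma α)) * 1 :=
              mul_le_mul_of_nonneg_left e2 hq1
          _ = NG * (β / ((α + β - 1) * Real.Gamma α)) := mul_one _
      calc ‖Dplus σ 0 α r * Dminus G t α r‖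
          = |Dplus σ 0 α r| * |Dminus G t α r| := by rw [Real.norm_eq_abs, abs_mul]
        _ ≤ ((1 / Real.Gamma (1 - α)) * (Kinf + (α / (β - α)) * Khol) * r ^ (-α)) *
            (NG * (β / ((α + β - 1) * Real.Gamma α))) :=
            mul_le_mul h1' h2' (abs_nonneg _)
              (mul_nonneg (mul_nonneg (one_div_nonneg.mpr hΓ1a.le) hq0)
                (Real.rpow_nonneg hr.1.le _))
        _ = C * r ^ (-α) := by rw [hC]; ring
  have hIg := houter g Ng hNg0 holg hgc
  have hIg' := houter g' Ng' hNg'0 holg' hg'c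
  have hsplit : youngInt α σ g t - youngInt α σ g' t
      = ∫ r in (0:ℝ)..t, Dplus σ 0 α r * Dminus (fun s => g s - g' s) t α r := by
    rw [youngInt, youngInt, ← intervalIntegral.integral_sub hIg hIg']
    apply intervalIntegral.integral_congr
    intro r hr
    rw [Set.uIcc_of_le ht0] at hr
    simp only []
    rcases eq_or_lt_of_le hr.2 with heq | hrt
    · rw [heq, aux_Dminus_self, aux_Dminus_self, aux_Dminus_self]; ring
    · have i1 := aux_inner_integrable hβ0 hNg0 holg hgc
        (by linarith : (-1:ℝ) < β + α - 2) hr.1 hrt htT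
      have i2 := aux_inner_integrable hβ0 hNg'0 holg' hg'c
        (by linarith : (-1:ℝ) < β + α - 2) hr.1 hrt htT
      have hlin := aux_Dminus_linear (t := t) i1 i2
      rw [← hlin]
      ring
  rw [hsplit]
  set c1 := (1 / Real.Gamma (1 - α)) * Kinf *
      (H * (β / ((α + β - 1) * Real.Gamma α))) with hc1
  set c2 := (1 / Real.Gamma (1 - α)) * ((α / (β - α)) * Khol) *
      (H * (β / ((α + β - 1) * Real.Gamma α))) with hc2
  have hint1 : IntervalIntegrable (fun r => r ^ (-α) * (t - r) ^ (α + β - 1)) volume 0 t := by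
    apply IntervalIntegrable.mul_continuousOn
      (intervalIntegral.intervalIntegrable_rpow' (by linarith))
    apply ContinuousOn.rpow_const (continuous_const.sub continuous_id).continuousOn
    intro x _
    exact Or.inr (by linarith)
  have hint2 : IntervalIntegrable (fun r => r ^ (β - α) * (t - r) ^ (α + β - 1)) volume 0 t := by
    apply IntervalIntegrable.mul_continuousOn
      (intervalIntegral.intervalIntegrable_rpow' (by linarith))
    apply ContinuousOn.rpow_const (continuous_const.sub continuous_id).continuousOn
    intro x _
    exact Or.inr (by linarith)
  have hbound := aux_abs_integral_le ht0 ((hint1.const_mul c1).add (hint2.const_mul c2))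
      (f := fun r => Dplus σ 0 α r * Dminus (fun s => g s - g' s) t α r) ?_
  · refine hbound.trans ?_
    have hval : (∫ r in (0:ℝ)..t, (c1 * (r ^ (-α) * (t - r) ^ (α + β - 1)) +
        c2 * (r ^ (β - α) * (t - r) ^ (α + β - 1))))
        = c1 * (t ^ β * betaFn (1 - α) (α + β)) +
          c2 * (t ^ (2 * β) * betaFn (1 + β - α) (α + β)) := by
      rw [intervalIntegral.integral_add (hint1.const_mul c1) (hint2.const_mul c2),
        intervalIntegral.integral_const_mul, intervalIntegral.integral_const_mul,
        aux_beta1 hαl hαβ ht0', aux_beta2 (by linarith) hαβ ht0']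
    rw [hval]
    have heq1 : c1 * (t ^ β * betaFn (1 - α) (α + β)) = Kinf * H * t1 * t ^ β := by
      rw [hc1, ht1, aux_betaFn_comm (1 - α) (α + β)]
      field_simp
    have heq2 : c2 * (t ^ (2 * β) * betaFn (1 + β - α) (α + β))
        = Khol * H * t2 * t ^ (2 * β) := by
      rw [hc2, ht2, aux_betaFn_comm (1 + β - α) (α + β)]
      field_simp
    rw [heq1, heq2]
    have htβ : t ^ β ≤ T ^ β := Real.rpow_le_rpow ht0 htT hβ0.le
    have ht2β : t ^ (2 * β) ≤ T ^ β := by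
      calc t ^ (2 * β) ≤ t ^ β :=
            Real.rpow_le_rpow_of_exponent_ge ht0' (le_trans htT hT1) (by linarith)
        _ ≤ T ^ β := htβ
    have hTβ0 : (0:ℝ) ≤ T ^ β := Real.rpow_nonneg hT.le β
    have hstep : Kinf * H * t1 * t ^ β + Khol * H * t2 * t ^ (2 * β)
        ≤ Kinf * H * t1 * T ^ β + Khol * H * t2 * T ^ β := by
      apply add_le_add
      · exact mul_le_mul_of_nonneg_left htβ
          (mul_nonneg (mul_nonneg hKinf0 hH0) ht1p.le)
      · exact mul_le_mul_of_nonneg_left ht2β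
          (mul_nonneg (mul_nonneg hKh0 hH0) ht2p.le)
    refine hstep.trans ?_
    rw [hk]
    nlinarith [mul_nonneg (mul_nonneg (mul_nonneg ht1p.le hKh0) hH0) hTβ0,
      mul_nonneg (mul_nonneg (mul_nonneg ht2p.le hKinf0) hH0) hTβ0]
  · intro r hr
    rcases eq_or_lt_of_le hr.1 with heq | hr0
    · rw [← heq, aux_Dplus_zero σ α hα0.ne',
        Real.zero_rpow (by intro hcc; nlinarith : -α ≠ 0),
        Real.zero_rpow (by intro hcc; nlinarith : β - α ≠ 0)]
      simp
    · rcases eq_or_lt_of_le hr.2 with heq | hrt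
      · rw [heq, aux_Dminus_self, sub_self,
          Real.zero_rpow (by intro hcc; nlinarith : α + β - 1 ≠ 0)]
        simp
      · have b1 := aux_Dplus_bound hβ0 hβ2 hα0 hβα hαl hKinfb hKh0 holσ hr0
          (le_trans hr.2 htT)
        have b2 := aux_Dminus_bound hβ0 hβ2 hα0 hαl hαβ hH0 holh hr.1 hrt htT
        calc |Dplus σ 0 α r * Dminus (fun s => g s - g' s) t α r|
            = |Dplus σ 0 α r| * |Dminus (fun s => g s - g' s) t α r| := abs_mul _ _
          _ ≤ ((1 / Real.Gamma (1 - α)) *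
                (Kinf * r ^ (-α) + α / (β - α) * Khol * r ^ (β - α))) *
              (H * (β / ((α + β - 1) * Real.Gamma α)) * (t - r) ^ (α + β - 1)) :=
              mul_le_mul b1 b2 (abs_nonneg _)
                (mul_nonneg (one_div_nonneg.mpr hΓ1a.le)
                  (add_nonneg (mul_nonneg hKinf0 (Real.rpow_nonneg hr0.le _))
                    (mul_nonneg (mul_nonneg (div_nonneg hα0.le hba.le) hKh0)
                      (Real.rpow_nonneg hr0.le _))))
          _ = c1 * (r ^ (-α) * (t - r) ^ (α + β - 1)) +
              c2 * (r ^ (β - α) * (t - r) ^ (α + β - 1)) := by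
              rw [hc1, hc2]; ring

end AuxLemmas

/-- Proposition 4.2 (one-dimensional case): stability estimate for deterministic
differential equations driven by `β`-Hölder continuous functions. -/
theorem stability_estimate (α β T Lb x₀ : ℝ) (b σ g g' x x' : ℝ → ℝ)
    (hβ1 : 1 / 2 < β) (hβ2 : β < 1) (hα1 : 1 - β < α) (hα2 : α < 1 / 2)
    (hT : 0 < T) (hLb : 0 ≤ Lb) (hT2 : T ≤ min 1 (1 / (2 * Lb)))
    (hb : ∀ z z' : ℝ, |b z - b z'| ≤ Lb * |z - z'|)
    (hσ : BddAbove (holderSet σ 0 T β))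
    (hg : BddAbove (holderSet g 0 T β)) (hg' : BddAbove (holderSet g' 0 T β))
    (hx : ContinuousOn x (Set.Icc 0 T)) (hx' : ContinuousOn x' (Set.Icc 0 T))
    (heq : ∀ t ∈ Set.Icc (0 : ℝ) T,
      x t = x₀ + (∫ s in (0 : ℝ)..t, b (x s)) + youngInt α σ g t)
    (heq' : ∀ t ∈ Set.Icc (0 : ℝ) T,
      x' t = x₀ + (∫ s in (0 : ℝ)..t, b (x' s)) + youngInt α σ g' t) :
    supNorm (fun t => x t - x' t) 0 T ≤
      4 * kConst α β * (supNorm σ 0 T + holderNorm σ 0 T β) *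
        holderNorm (fun s => g s - g' s) 0 T β * T ^ β := by
  have hβ0 : 0 < β := by linarith
  have hT1 : T ≤ 1 := le_trans hT2 (min_le_left _ _)
  have hLb' : 0 < Lb := by
    rcases eq_or_lt_of_le hLb with heqL | h
    · exfalso
      rw [← heqL] at hT2
      norm_num at hT2
      linarith
    · exact h
  have hTLb : T * Lb ≤ 1 / 2 := by
    have h1 : T ≤ 1 / (2 * Lb) := le_trans hT2 (min_le_right _ _)
    rw [le_div_iff₀ (by positivity)] at h1
    nlinarith
  have hbc : Continuous b := by
    have hlip : LipschitzWith (Real.toNNReal Lb) b := by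
      apply LipschitzWith.of_dist_le_mul
      intro z z'
      rw [Real.dist_eq, Real.dist_eq, Real.coe_toNNReal _ hLb]
      exact hb z z'
    exact hlip.continuous
  have hDc : ContinuousOn (fun u => x u - x' u) (Set.Icc 0 T) := hx.sub hx'
  have hbddD : BddAbove ((fun r => |x r - x' r|) '' Set.Icc 0 T) :=
    IsCompact.bddAbove_image isCompact_Icc hDc.abs
  set M := supNorm (fun u => x u - x' u) 0 T with hM
  have hMub : ∀ u ∈ Set.Icc (0:ℝ) T, |x u - x' u| ≤ M := fun u hu => aux_supNorm_ge hbddD hu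
  have hM0 : 0 ≤ M := le_trans (abs_nonneg _) (hMub 0 ⟨le_rfl, hT.le⟩)
  set K := kConst α β * (supNorm σ 0 T + holderNorm σ 0 T β) *
      holderNorm (fun s => g s - g' s) 0 T β * T ^ β with hK
  have hJ : ∀ t ∈ Set.Icc (0:ℝ) T, |youngInt α σ g t - youngInt α σ g' t| ≤ K :=
    fun t ht => aux_J_bound hβ1 hβ2 hα1 hα2 hT hT1 hσ hg hg' ht.1 ht.2
  have hK0 : 0 ≤ K := le_trans (abs_nonneg _) (hJ 0 ⟨le_rfl, hT.le⟩)
  have hpt : ∀ t ∈ Set.Icc (0:ℝ) T, |x t - x' t| ≤ 1 / 2 * M + K := by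
    intro t ht
    have hbx : IntervalIntegrable (fun s => b (x s)) volume 0 t := by
      apply ContinuousOn.intervalIntegrable
      rw [Set.uIcc_of_le ht.1]
      exact hbc.comp_continuousOn (hx.mono (Set.Icc_subset_Icc le_rfl ht.2))
    have hbx' : IntervalIntegrable (fun s => b (x' s)) volume 0 t := by
      apply ContinuousOn.intervalIntegrable
      rw [Set.uIcc_of_le ht.1]
      exact hbc.comp_continuousOn (hx'.mono (Set.Icc_subset_Icc le_rfl ht.2))
    have he : x t - x' t = (∫ s in (0:ℝ)..t, (b (x s) - b (x' s))) +
        (youngInt α σ g t - youngInt α σ g' t) := by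
      rw [intervalIntegral.integral_sub hbx hbx', heq t ht, heq' t ht]
      ring
    rw [he]
    have h1 : |∫ s in (0:ℝ)..t, (b (x s) - b (x' s))| ≤ Lb * M * t := by
      have hb1 := aux_abs_integral_le ht.1
          (_root_.intervalIntegrable_const (c := Lb * M)) (f := fun s => b (x s) - b (x' s)) ?_
      · rw [intervalIntegral.integral_const, sub_zero, smul_eq_mul] at hb1
        calc |∫ s in (0:ℝ)..t, (b (x s) - b (x' s))| ≤ t * (Lb * M) := hb1
          _ = Lb * M * t := by ring
      · intro s hs
        calc |b (x s) - b (x' s)| ≤ Lb * |x s - x' s| := hb _ _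
          _ ≤ Lb * M := mul_le_mul_of_nonneg_left
              (hMub s ⟨hs.1, le_trans hs.2 ht.2⟩) hLb
    have h2 : Lb * M * t ≤ 1 / 2 * M := by
      have h3 : Lb * M * t ≤ Lb * M * T :=
        mul_le_mul_of_nonneg_left ht.2 (mul_nonneg hLb hM0)
      nlinarith [mul_le_mul_of_nonneg_right hTLb hM0]
    calc |(∫ s in (0:ℝ)..t, (b (x s) - b (x' s))) +
        (youngInt α σ g t - youngInt α σ g' t)|
        ≤ |∫ s in (0:ℝ)..t, (b (x s) - b (x' s))| +
          |youngInt α σ g t - youngInt α σ g' t| := abs_add_le _ _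
      _ ≤ 1 / 2 * M + K := add_le_add (h1.trans h2) (hJ t ht)
  have hMle : M ≤ 1 / 2 * M + K := by
    rw [hM]
    exact aux_supNorm_le hT.le hpt
  have hR : 4 * kConst α β * (supNorm σ 0 T + holderNorm σ 0 T β) *
      holderNorm (fun s => g s - g' s) 0 T β * T ^ β = 4 * K := by
    rw [hK]; ring
  rw [hR]
  linarith
end

section
/- Let c ≥ 2/e be a real number. Then the function Φ(x) := exp( (1/x) · log( c · Γ(x+1)² / Γ(2x+1) ) ) is nonincreasing on [1, ∞); that is, for all 1 ≤ x ≤ y, ( c · Γ(y+1)² / Γ(2y+1) )^{1/y} ≤ ( c · Γ(x+1)² / Γ(2x+1) )^{1/x}. -/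
open Real Filter Finset Topology

noncomputable def rr (i : ℕ) (x : ℝ) : ℝ := Real.log (2*x+1+2*i) - Real.log (x+1+i)

noncomputable def TT (x : ℝ) (n : ℕ) : ℝ :=
  Real.log (Real.GammaSeq (x+1) n ^ 2 / Real.GammaSeq (2*x+1) (2*n+1))

noncomputable def Lg (z : ℝ) : ℝ :=
  Real.log (Real.Gamma (z+1) ^ 2 / Real.Gamma (2*z+1))



lemma pair_sum (g : ℕ → ℝ) (n : ℕ) :
    ∑ j ∈ range (2*n+2), g j = ∑ i ∈ range (n+1), (g (2*i) + g (2*i+1)) := by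
  induction n with
  | zero => simp [Finset.sum_range_succ]
  | succ n ih =>
      have h2 : 2*(n+1)+2 = (2*n+2)+1+1 := by ring
      rw [h2, Finset.sum_range_succ, Finset.sum_range_succ, ih, Finset.sum_range_succ]
      have e1 : 2*n+2 = 2*(n+1) := by ring
      have e2 : 2*n+2+1 = 2*(n+1)+1 := by ring
      rw [e1, e2, Finset.sum_range_succ, Finset.sum_range_succ]
      ring

lemma gammaSeq_pos {s : ℝ} (hs : 0 < s) {n : ℕ} (hn : 1 ≤ n) : 0 < Real.GammaSeq s n := by
  unfold Real.GammaSeq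
  have hn' : (0:ℝ) < n := by exact_mod_cast hn
  have : 0 < ∏ j ∈ range (n+1), (s + j) :=
    Finset.prod_pos fun j _ => by positivity
  positivity

lemma log_gammaSeq {s : ℝ} (hs : 0 < s) {n : ℕ} (hn : 1 ≤ n) :
    Real.log (Real.GammaSeq s n)
      = s * Real.log n + Real.log (Nat.factorial n : ℝ) - ∑ j ∈ range (n+1), Real.log (s + j) := by
  unfold Real.GammaSeq
  have hn' : (0:ℝ) < n := by exact_mod_cast hn
  have hfac : (0:ℝ) < (n.factorial : ℝ) := by exact_mod_cast Nat.factorial_pos n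
  have hprod : ∀ j ∈ range (n+1), s + (j:ℝ) ≠ 0 := fun j _ => by positivity
  rw [Real.log_div (by positivity) (Finset.prod_ne_zero_iff.mpr hprod),
    Real.log_mul (by positivity) hfac.ne', Real.log_rpow hn', Real.log_prod hprod]
lemma TT_diff (x : ℝ) (hx : 1 ≤ x) (n : ℕ) (hn : 1 ≤ n) :
    TT x n - TT 1 n
      = (2*x-2) * (Real.log n - Real.log ((2*n+1 : ℕ) : ℝ))
        + ∑ i ∈ range (n+1), (rr i x - rr i 1) := by
  have h2n : 1 ≤ 2*n+1 := by omega
  have hlog : ∀ y : ℝ, 1 ≤ y → TT y n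
      = 2*((y+1)*Real.log n + Real.log (n.factorial:ℝ)
            - ∑ j ∈ range (n+1), Real.log (y+1+j))
        - ((2*y+1)*Real.log ((2*n+1:ℕ):ℝ) + Real.log ((2*n+1).factorial:ℝ)
            - ∑ j ∈ range (2*n+2), Real.log (2*y+1+j)) := by
    intro y hy
    have hy1 : (0:ℝ) < y+1 := by linarith
    have hy2 : (0:ℝ) < 2*y+1 := by linarith
    have g1 := gammaSeq_pos hy1 (n := n) hn
    have g2 := gammaSeq_pos hy2 (n := 2*n+1) h2n
    have hr : range (2*n+1+1) = range (2*n+2) := by norm_num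
    rw [TT, Real.log_div (by positivity) g2.ne', Real.log_pow,
      log_gammaSeq hy1 hn, log_gammaSeq hy2 h2n, hr]
    push_cast
    ring
  have key : ∑ j ∈ range (2*n+2), (Real.log (2*x+1+j) - Real.log (2*1+1+j))
      = ∑ i ∈ range (n+1), ((rr i x - rr i 1)
          + 2*(Real.log (x+1+i) - Real.log (1+1+i))) := by
    rw [pair_sum (fun j => Real.log (2*x+1+j) - Real.log (2*1+1+j)) n]
    refine Finset.sum_congr rfl fun i _ => ?_
    have hxi : (0:ℝ) < x+1+i := by positivity
    have h1i : (0:ℝ) < 1+1+(i:ℝ) := by positivity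
    have e1 : (2*x+1+((2*i+1:ℕ):ℝ)) = 2*(x+1+i) := by push_cast; ring
    have e2 : (2*(1:ℝ)+1+((2*i+1:ℕ):ℝ)) = 2*(1+1+(i:ℝ)) := by push_cast; ring
    have e3 : (2*x+1+((2*i:ℕ):ℝ)) = 2*x+1+2*i := by push_cast; ring
    have e4 : (2*(1:ℝ)+1+((2*i:ℕ):ℝ)) = 2*1+1+2*(i:ℝ) := by push_cast; ring
    simp only [e1, e2, e3, e4, Real.log_mul two_ne_zero hxi.ne',
      Real.log_mul two_ne_zero h1i.ne', rr]
    ring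
  have s1 : ∑ j ∈ range (2*n+2), (Real.log (2*x+1+j) - Real.log (2*1+1+j))
      = ∑ j ∈ range (2*n+2), Real.log (2*x+1+j)
        - ∑ j ∈ range (2*n+2), Real.log (2*1+1+j) := Finset.sum_sub_distrib _ _
  have s2 : ∑ i ∈ range (n+1), ((rr i x - rr i 1)
          + 2*(Real.log (x+1+i) - Real.log (1+1+i)))
      = ∑ i ∈ range (n+1), (rr i x - rr i 1)
        + 2*(∑ i ∈ range (n+1), Real.log (x+1+i)
             - ∑ i ∈ range (n+1), Real.log (1+1+i)) := by
    rw [Finset.sum_add_distrib, ← Finset.mul_sum, Finset.sum_sub_distrib, Finset.sum_sub_distrib]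
  rw [hlog x hx, hlog 1 le_rfl]
  rw [s1, s2] at key
  linear_combination key
lemma TT_tendsto (x : ℝ) (hx : 1 ≤ x) :
    Tendsto (fun n => TT x n) atTop
      (𝓝 (Real.log (Real.Gamma (x+1) ^ 2 / Real.Gamma (2*x+1)))) := by
  have hx1 : (0:ℝ) < x+1 := by linarith
  have hx2 : (0:ℝ) < 2*x+1 := by linarith
  have hG1 : 0 < Real.Gamma (x+1) := Real.Gamma_pos_of_pos hx1
  have hG2 : 0 < Real.Gamma (2*x+1) := Real.Gamma_pos_of_pos hx2
  have h1 : Tendsto (fun n => Real.GammaSeq (x+1) n ^ 2) atTop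
      (𝓝 (Real.Gamma (x+1) ^ 2)) := (Real.GammaSeq_tendsto_Gamma (x+1)).pow 2
  have hmono : Tendsto (fun n : ℕ => 2*n+1) atTop atTop :=
    tendsto_atTop_mono (fun n => by simp; omega) tendsto_id
  have h2 : Tendsto (fun n => Real.GammaSeq (2*x+1) (2*n+1)) atTop
      (𝓝 (Real.Gamma (2*x+1))) := (Real.GammaSeq_tendsto_Gamma (2*x+1)).comp hmono
  have h3 := h1.div h2 hG2.ne'
  exact ((Real.continuousAt_log (by positivity)).tendsto.comp h3)
lemma rr_eq (i : ℕ) (x : ℝ) (hx : 1 ≤ x) :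
    rr i x = Real.log (2 - (x+1+i)⁻¹) := by
  have h1 : (0:ℝ) < x+1+i := by positivity
  have h2 : 2*x+1+2*(i:ℝ) = (2 - (x+1+i)⁻¹) * (x+1+i) := by field_simp; ring
  have h3 : (0:ℝ) < 2 - (x+1+i)⁻¹ := by
    have : (x+1+(i:ℝ))⁻¹ ≤ 1 := by
      rw [inv_le_one_iff₀]; right; linarith
    linarith
  rw [rr, h2, Real.log_mul h3.ne' h1.ne']
  ring

lemma rr_concave (i : ℕ) {a b l m : ℝ} (ha : 1 ≤ a) (hb : 1 ≤ b)
    (hl : 0 ≤ l) (hm : 0 ≤ m) (hlm : l + m = 1) :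
    l * rr i a + m * rr i b ≤ rr i (l*a + m*b) := by
  have hab : 1 ≤ l*a + m*b := by nlinarith
  have hpa : (0:ℝ) < a+1+i := by positivity
  have hpb : (0:ℝ) < b+1+i := by positivity
  have hpc : (0:ℝ) < l*a+m*b+1+i := by positivity
  have hinva : (a+1+(i:ℝ))⁻¹ ≤ 1/2 := by
    rw [inv_eq_one_div, div_le_div_iff₀ hpa two_pos]; linarith
  have hinvb : (b+1+(i:ℝ))⁻¹ ≤ 1/2 := by
    rw [inv_eq_one_div, div_le_div_iff₀ hpb two_pos]; linarith
  set p := 2 - (a+1+(i:ℝ))⁻¹ with hp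
  set q := 2 - (b+1+(i:ℝ))⁻¹ with hq
  have hppos : (0:ℝ) < p := by simp only [hp]; linarith
  have hqpos : (0:ℝ) < q := by simp only [hq]; linarith
  rw [rr_eq i a ha, rr_eq i b hb, rr_eq i _ hab]
  have step1 : p ^ l * q ^ m ≤ l*p + m*q :=
    Real.geom_mean_le_arith_mean2_weighted hl hm hppos.le hqpos.le hlm
  have step2 : l*p + m*q ≤ 2 - (l*a+m*b+1+i)⁻¹ := by
    have harm : (l*a+m*b+1+(i:ℝ))⁻¹ ≤ l*(a+1+i)⁻¹ + m*(b+1+i)⁻¹ := by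
      rw [inv_eq_one_div, div_le_iff₀ hpc]
      field_simp
      have hm1 : m = 1 - l := by linarith
      have hl1 : l ≤ 1 := by linarith
      rw [hm1]
      nlinarith [mul_nonneg (mul_nonneg hl (by linarith : (0:ℝ) ≤ 1 - l))
        (sq_nonneg (a-b))]
    simp only [hp, hq]; nlinarith
  calc l * Real.log p + m * Real.log q
      = Real.log (p ^ l * q ^ m) := by
        rw [Real.log_mul (by positivity) (by positivity),
          Real.log_rpow hppos, Real.log_rpow hqpos]
    _ ≤ Real.log (2 - (l*a+m*b+1+i)⁻¹) := by
        apply Real.log_le_log (by positivity)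
        exact step1.trans step2
lemma rr_one (i : ℕ) : rr i 1 = Real.log (3+2*(i:ℝ)) - Real.log (2+(i:ℝ)) := by
  rw [rr]; norm_num

lemma rr_tangent (i : ℕ) {y : ℝ} (hy : 1 ≤ y) :
    rr i y - rr i 1 ≤ (y-1) * (2/((2*(i:ℝ)+3)*(2*(i:ℝ)+4))) := by
  have h1 : (0:ℝ) < y+1+i := by positivity
  have h2 : (0:ℝ) < 2*y+1+2*(i:ℝ) := by positivity
  have h3 : (0:ℝ) < 3+2*(i:ℝ) := by positivity
  have h4 : (0:ℝ) < 2+(i:ℝ) := by positivity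
  have hA : (0:ℝ) < (2*y+1+2*(i:ℝ))*(2+(i:ℝ)) := by positivity
  have hB : (0:ℝ) < (y+1+(i:ℝ))*(3+2*(i:ℝ)) := by positivity
  have heq : rr i y - rr i 1
      = Real.log (((2*y+1+2*(i:ℝ))*(2+(i:ℝ))) / ((y+1+(i:ℝ))*(3+2*(i:ℝ)))) := by
    rw [rr, rr_one, Real.log_div hA.ne' hB.ne', Real.log_mul h2.ne' h4.ne',
      Real.log_mul h1.ne' h3.ne']
    ring
  have hlog := Real.log_le_sub_one_of_pos (div_pos hA hB)
  have hfrac : ((2*y+1+2*(i:ℝ))*(2+(i:ℝ))) / ((y+1+(i:ℝ))*(3+2*(i:ℝ))) - 1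
      = (y-1) / ((y+1+(i:ℝ))*(3+2*(i:ℝ))) := by
    field_simp
    ring
  have hlast : (y-1) / ((y+1+(i:ℝ))*(3+2*(i:ℝ)))
      ≤ (y-1) * (2/((2*(i:ℝ)+3)*(2*(i:ℝ)+4))) := by
    rw [div_eq_mul_inv]
    apply mul_le_mul_of_nonneg_left _ (by linarith : (0:ℝ) ≤ y - 1)
    rw [inv_le_iff_one_le_mul₀ hB]
    have hp : (0:ℝ) < (2*(i:ℝ)+3)*(2*(i:ℝ)+4) := by positivity
    rw [div_mul_eq_mul_div, le_div_iff₀ hp]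
    nlinarith [h1, h3, hy]
  rw [heq]
  calc Real.log _ ≤ _ := hlog
    _ = (y-1) / ((y+1+(i:ℝ))*(3+2*(i:ℝ))) := hfrac
    _ ≤ _ := hlast

noncomputable def tailS (n : ℕ) : ℝ := ∑ t ∈ range (n+2), 1/((n:ℝ)+3+t)

lemma tailS_le (n : ℕ) : tailS n ≤ Real.log 2 := by
  have step : ∀ t ∈ range (n+2), 1/((n:ℝ)+3+t)
      ≤ Real.log ((n:ℝ)+2+(t+1:ℕ)) - Real.log ((n:ℝ)+2+t) := by
    intro t _
    have p1 : (0:ℝ) < (n:ℝ)+2+t := by positivity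
    have p2 : (0:ℝ) < (n:ℝ)+3+t := by positivity
    have h := Real.log_le_sub_one_of_pos (div_pos p1 p2)
    rw [Real.log_div p1.ne' p2.ne'] at h
    have e : ((n:ℝ)+2+t) / ((n:ℝ)+3+t) - 1 = -(1/((n:ℝ)+3+t)) := by
      field_simp
      norm_num
    rw [e] at h
    have e2 : (n:ℝ)+2+((t+1:ℕ):ℝ) = (n:ℝ)+3+t := by push_cast; ring
    rw [e2]
    linarith
  have hsum := Finset.sum_le_sum step
  rw [Finset.sum_range_sub (fun t => Real.log ((n:ℝ)+2+t))] at hsum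
  have e3 : Real.log ((n:ℝ)+2+((n+2:ℕ):ℝ)) - Real.log ((n:ℝ)+2+(0:ℕ))
      = Real.log 2 := by
    push_cast
    have : (n:ℝ)+2+((n:ℝ)+2) = 2*((n:ℝ)+2) := by ring
    rw [add_zero, this, Real.log_mul two_ne_zero (by positivity), ]
    ring
  rw [e3] at hsum
  exact hsum

lemma sum_delta (n : ℕ) :
    ∑ i ∈ range (n+1), 2/((2*(i:ℝ)+3)*(2*(i:ℝ)+4)) = 2 * tailS n - 1 := by
  induction n with
  | zero =>
      simp [tailS, Finset.sum_range_succ]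
      norm_num
  | succ n ih =>
      rw [Finset.sum_range_succ, ih]
      have htail : tailS (n+1) = tailS n - 1/((n:ℝ)+3) + 1/(2*(n:ℝ)+5) + 1/(2*(n:ℝ)+6) := by
        set g : ℕ → ℝ := fun t => 1/((n:ℝ)+3+t) with hg
        set gg : ℕ → ℝ := fun t => 1/((n:ℝ)+4+t) with hgg
        have c1 : tailS (n+1) = ∑ t ∈ range (n+3), gg t := by
          rw [tailS]
          refine Finset.sum_congr rfl fun t _ => ?_
          simp only [hgg]
          push_cast
          ring_nf
        have c2 : ∀ t : ℕ, gg t = g (t+1) := by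
          intro t
          simp only [hg, hgg]
          push_cast
          ring_nf
        have c3 : ∑ t ∈ range (n+3), g t = ∑ t ∈ range (n+2), g (t+1) + g 0 :=
          Finset.sum_range_succ' g (n+2)
        have c4 : ∑ t ∈ range (n+3), g t = ∑ t ∈ range (n+2), g t + g (n+2) :=
          Finset.sum_range_succ g (n+2)
        have c5 : ∑ t ∈ range (n+3), gg t = ∑ t ∈ range (n+2), gg t + gg (n+2) :=
          Finset.sum_range_succ gg (n+2)
        have c6 : ∑ t ∈ range (n+2), gg t = ∑ t ∈ range (n+2), g (t+1) :=
          Finset.sum_congr rfl fun t _ => c2 t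
        have c7 : tailS n = ∑ t ∈ range (n+2), g t := rfl
        have e1 : g (n+2) = 1/(2*(n:ℝ)+5) := by simp only [hg]; push_cast; ring_nf
        have e2 : g 0 = 1/((n:ℝ)+3) := by simp only [hg]; push_cast; ring_nf
        have e3 : gg (n+2) = 1/(2*(n:ℝ)+6) := by simp only [hgg]; push_cast; ring_nf
        rw [c1, c5, c6]
        have : ∑ t ∈ range (n+2), g (t+1) = ∑ t ∈ range (n+2), g t + g (n+2) - g 0 := by
          rw [← c4, c3]; ring
        rw [this, e1, e2, e3, ← c7]
        ring
      rw [htail]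
      have hn3 : (0:ℝ) < (n:ℝ)+3 := by positivity
      have h5 : (0:ℝ) < 2*(n:ℝ)+5 := by positivity
      have h6 : (0:ℝ) < 2*(n:ℝ)+6 := by positivity
      push_cast
      field_simp
      ring

lemma diff_tendsto (x : ℝ) (hx : 1 ≤ x) :
    Tendsto (fun n => TT x n - TT 1 n) atTop (𝓝 (Lg x - Lg 1)) :=
  (TT_tendsto x hx).sub (TT_tendsto 1 le_rfl)

lemma bound_B {y : ℝ} (hy : 1 ≤ y) : Lg y - Lg 1 ≤ -(y-1) := by
  refine le_of_tendsto (diff_tendsto y hy) ?_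
  filter_upwards [eventually_ge_atTop 1] with n hn
  rw [TT_diff y hy n hn]
  have hn' : (0:ℝ) < n := by exact_mod_cast hn
  have hlog2 : Real.log 2 ≤ Real.log ((2*n+1:ℕ):ℝ) - Real.log n := by
    have e : Real.log 2 + Real.log n = Real.log (2*(n:ℝ)) :=
      (Real.log_mul two_ne_zero hn'.ne').symm
    have hle : Real.log (2*(n:ℝ)) ≤ Real.log ((2*n+1:ℕ):ℝ) := by
      apply Real.log_le_log (by positivity)
      push_cast; linarith
    linarith
  have hsum : ∑ i ∈ range (n+1), (rr i y - rr i 1) ≤ (y-1)*(2*Real.log 2 - 1) := by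
    calc ∑ i ∈ range (n+1), (rr i y - rr i 1)
        ≤ ∑ i ∈ range (n+1), (y-1) * (2/((2*(i:ℝ)+3)*(2*(i:ℝ)+4))) :=
          Finset.sum_le_sum fun i _ => rr_tangent i hy
      _ = (y-1) * ∑ i ∈ range (n+1), 2/((2*(i:ℝ)+3)*(2*(i:ℝ)+4)) := by
          rw [Finset.mul_sum]
      _ ≤ (y-1)*(2*Real.log 2 - 1) := by
          apply mul_le_mul_of_nonneg_left _ (by linarith : (0:ℝ) ≤ y-1)
          rw [sum_delta n]
          have := tailS_le n
          linarith
  have haff : (2*y-2) * (Real.log n - Real.log ((2*n+1:ℕ):ℝ))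
      ≤ (2*y-2) * (-Real.log 2) :=
    mul_le_mul_of_nonneg_left (by linarith) (by linarith : (0:ℝ) ≤ 2*y-2)
  have hl2 : (0:ℝ) < Real.log 2 := Real.log_pos (by norm_num)
  nlinarith [hsum, haff]

lemma bound_A {x y m : ℝ} (hx : 1 ≤ x) (hy : 1 ≤ y) (hm0 : 0 ≤ m) (hm1 : m ≤ 1)
    (hrep : x = (1-m)*1 + m*y) : m * (Lg y - Lg 1) ≤ Lg x - Lg 1 := by
  refine le_of_tendsto_of_tendsto ((diff_tendsto y hy).const_mul m) (diff_tendsto x hx) ?_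
  filter_upwards [eventually_ge_atTop 1] with n hn
  show m * (TT y n - TT 1 n) ≤ TT x n - TT 1 n
  rw [TT_diff y hy n hn, TT_diff x hx n hn]
  have hsum : m * (∑ i ∈ range (n+1), (rr i y - rr i 1))
      ≤ ∑ i ∈ range (n+1), (rr i x - rr i 1) := by
    rw [Finset.mul_sum]
    apply Finset.sum_le_sum
    intro i _
    have h := rr_concave i (le_refl (1:ℝ)) hy (by linarith : (0:ℝ) ≤ 1-m) hm0
      (by ring : (1-m) + m = 1)
    rw [← hrep] at h
    linarith
  have haff : (2*x-2) = m * (2*y-2) := by linear_combination 2*hrep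
  rw [haff]
  linarith

/-- The function `Φ(x) = (c Γ(x+1)²/Γ(2x+1))^{1/x}` is nonincreasing on `[1,∞)` when
`c ≥ 2/e`. -/
theorem gamma_ratio_antitone (c : ℝ) (hc : 2 / Real.exp 1 ≤ c) :
    ∀ x y : ℝ, 1 ≤ x → x ≤ y →
      (c * Real.Gamma (y + 1) ^ 2 / Real.Gamma (2 * y + 1)) ^ (1 / y) ≤
        (c * Real.Gamma (x + 1) ^ 2 / Real.Gamma (2 * x + 1)) ^ (1 / x) := by
  intro x y hx hxy
  have hcpos : (0:ℝ) < c := lt_of_lt_of_le (by positivity) hc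
  have hy1 : 1 ≤ y := hx.trans hxy
  have hx0 : (0:ℝ) < x := by linarith
  have hy0 : (0:ℝ) < y := by linarith
  have hGpos : ∀ z : ℝ, 1 ≤ z → 0 < c * Real.Gamma (z+1)^2 / Real.Gamma (2*z+1) := by
    intro z hz
    have h1 : 0 < Real.Gamma (z+1) := Real.Gamma_pos_of_pos (by linarith)
    have h2 : 0 < Real.Gamma (2*z+1) := Real.Gamma_pos_of_pos (by linarith)
    positivity
  have hlogG : ∀ z : ℝ, 1 ≤ z →
      Real.log (c * Real.Gamma (z+1)^2 / Real.Gamma (2*z+1)) = Real.log c + Lg z := by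
    intro z hz
    have h1 : 0 < Real.Gamma (z+1) := Real.Gamma_pos_of_pos (by linarith)
    have h2 : 0 < Real.Gamma (2*z+1) := Real.Gamma_pos_of_pos (by linarith)
    rw [Lg, Real.log_div (by positivity) h2.ne', Real.log_div (by positivity) h2.ne',
      Real.log_mul hcpos.ne' (by positivity)]
    ring
  have hLg1 : Lg 1 = -Real.log 2 := by
    have g2 : Real.Gamma 2 = 1 := by
      have := Real.Gamma_nat_eq_factorial 1
      norm_num at this
      convert this using 2
      norm_num
    have g3 : Real.Gamma 3 = 2 := by
      have := Real.Gamma_nat_eq_factorial 2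
      norm_num at this
      convert this using 2
      norm_num
    rw [Lg]
    norm_num [g2, g3]
    rw [one_div, Real.log_inv]
  have ha1 : -1 ≤ Real.log c + Lg 1 := by
    have h1 : Real.log (2 / Real.exp 1) ≤ Real.log c :=
      Real.log_le_log (by positivity) hc
    rw [Real.log_div two_ne_zero (Real.exp_ne_zero 1), Real.log_exp] at h1
    rw [hLg1]
    linarith
  rcases eq_or_lt_of_le hxy with rfl | hlt
  · exact le_refl _
  · have hy2 : 1 < y := lt_of_le_of_lt hx hlt
    set m := (x-1)/(y-1) with hm
    have hm0 : 0 ≤ m := div_nonneg (by linarith) (by linarith)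
    have hm1 : m ≤ 1 := by
      rw [hm, div_le_one (by linarith)]
      linarith
    have hrep : x = (1-m)*1 + m*y := by
      have : m * (y-1) = x - 1 := div_mul_cancel₀ _ (by linarith : y - 1 ≠ 0)
      linarith [this]
    have hB := bound_B hy1
    have hA := bound_A hx hy1 hm0 hm1 hrep
    set a1 := Real.log c + Lg 1 with ha1d
    set ax := Real.log c + Lg x with haxd
    set ay := Real.log c + Lg y with hayd
    have hBy : ay ≤ y * a1 := by
      have h1 : ay - a1 ≤ -(y-1) := by rw [hayd, ha1d]; linarith [hB]
      nlinarith [ha1]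
    have hAx : (1-m)*a1 + m*ay ≤ ax := by
      have : m * (ay - a1) ≤ ax - a1 := by rw [hayd, ha1d, haxd]; linarith [hA]
      nlinarith [this]
    have hmain : x * ay ≤ y * ax := by
      have k1 : (1-m)*ay ≤ (1-m)*(y*a1) :=
        mul_le_mul_of_nonneg_left hBy (by linarith)
      have k2 : y*((1-m)*a1 + m*ay) ≤ y*ax :=
        mul_le_mul_of_nonneg_left hAx (by linarith)
      nlinarith [k1, k2, hrep]
    rw [Real.rpow_def_of_pos (hGpos y hy1), Real.rpow_def_of_pos (hGpos x hx),
      Real.exp_le_exp, hlogG y hy1, hlogG x hx]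
    rw [one_div, one_div, ← div_eq_mul_inv, ← div_eq_mul_inv,
      div_le_div_iff₀ hy0 hx0]
    calc (Real.log c + Lg y) * x = x * ay := by rw [hayd]; ring
      _ ≤ y * ax := hmain
      _ = (Real.log c + Lg x) * y := by rw [haxd]; ring
end
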